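/- Let E be a Polish space with Borel σ-algebra 𝓔 and U a compact metric space, let P^a(x,·) be a controlled transition kernel, and let R ⊆ R₁ be two concentric closed balls in E. Let u_n, u : E → U be Borel measurable controls with u_n(x) → u(x) for every x ∈ E, such that for every x ∈ E, sup_{B ∈ 𝓔} |Q^{u_n}(x,B) − Q^{u}(x,B)| → 0 as n → ∞. Assume (EC): sup_{x ∈ R} sup_v E_x^v[(τ_R)²] < ∞ with v ranging over {u_n : n ∈ ℕ} ∪ {u}. Let f_n : E → ℝ be a uniformly bounded sequence of Borel measurable functions with f_n(y) → f(y) for every y ∈ E. Then for every x ∈ R, E_x^{u_n}[Σ_{i=0}^{τ_R − 1} f_n(X_i)] → E_x^{u}[Σ_{i=0}^{τ_R − 1} f(X_i)] as n → ∞. -/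

import Mathlib

open MeasureTheory ProbabilityTheory Filter
open scoped ENNReal

/-- First hitting time of a set `B` by the path `ω` (`∞` if never hit). -/
noncomputable def hitTime {E : Type*} (B : Set E) (ω : ℕ → E) : ℕ∞ :=
  ⨅ (n : ℕ) (_ : ω n ∈ B), (n : ℕ∞)

/-- `τ_R = D_{R₁ᶜ} + D_R ∘ θ_{D_{R₁ᶜ}}`: first entrance time to `R` after first
leaving `R₁`. -/
noncomputable def tauR {E : Type*} (R R1 : Set E) (ω : ℕ → E) : ℕ∞ :=
  hitTime R1ᶜ ω + hitTime R (fun n => ω ((hitTime R1ᶜ ω).toNat + n))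

/-- Prepend a point to a path. -/
def prepend {E : Type*} (x : E) (ω : ℕ → E) : ℕ → E :=
  fun n => match n with
  | 0 => x
  | k + 1 => ω k

/-- `Pl` is the family of Ionescu–Tulcea laws `P_x` of the Markov chain with transition
kernel `Q` started at `x`: it is characterized by being a measurable family of
probability measures satisfying the one-step recursion
`P_x = (prepend x)_* ((Q x) bind Pl)`. -/
def IsPathLaw {E : Type*} [MeasurableSpace E] (Q : Kernel E E)
    (Pl : E → Measure (ℕ → E)) : Prop :=
  Measurable Pl ∧ (∀ x, IsProbabilityMeasure (Pl x)) ∧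
    ∀ x, Pl x = ((Q x).bind Pl).map (prepend x)

/-- The embedded kernel `Π(x,B) = P_x(τ_R < ∞, X_{τ_R} ∈ B)`, as a measure on `E`. -/
noncomputable def embMeas {E : Type*} [MeasurableSpace E] (R R1 : Set E)
    (Pl : E → Measure (ℕ → E)) (x : E) : Measure E :=
  ((Pl x).restrict {ω | tauR R R1 ω ≠ ⊤}).map (fun ω => ω ((tauR R R1 ω).toNat))

/-- `k`-th iterate of a measure-valued map (sub-Markov transition function):
`Π^0(x,·) = δ_x`, `Π^{k+1}(x,B) = ∫ Π^k(y,B) Π(x,dy)`. -/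
noncomputable def mIter {E : Type*} [MeasurableSpace E] (Pi0 : E → Measure E) :
    ℕ → E → Measure E
  | 0 => fun x => Measure.dirac x
  | k + 1 => fun x => (Pi0 x).bind (mIter Pi0 k)

/-- The kernel `Q^u(x,·) = P^{u(x)}(x,·)` of a Borel measurable control `u`. -/
noncomputable def Qctrl {E U : Type*} [MeasurableSpace E] [MeasurableSpace U]
    (P : Kernel (E × U) E) (u : E → U) (hu : Measurable u) : Kernel E E :=
  P.comap (fun x => (x, u x)) (measurable_id.prodMk hu)

/-- Total variation distance `sup_{B ∈ 𝓔} |μ(B) − ν(B)|`. -/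
noncomputable def tvDist {E : Type*} [MeasurableSpace E] (μ ν : Measure E) : ℝ :=
  ⨆ B : {B : Set E // MeasurableSet B}, |(μ B.1).toReal - (ν B.1).toReal|


section Aux

variable {α β : Type*} [MeasurableSpace α] [MeasurableSpace β]

lemma integrable_of_bdd' {μ : Measure β} [IsFiniteMeasure μ] {H : β → ℝ}
    (hH : AEStronglyMeasurable H μ) {M : ℝ} (hM : ∀ b, |H b| ≤ M) : Integrable H μ :=
  (integrable_const M).mono' hH (ae_of_all μ fun b => by simpa using hM b)

lemma abs_integral_le_of_bdd {μ : Measure β} [IsProbabilityMeasure μ]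
    {h : β → ℝ} {M : ℝ} (hM0 : 0 ≤ M) (hb : ∀ b, |h b| ≤ M) : |∫ b, h b ∂μ| ≤ M := by
  by_cases hi : Integrable h μ
  · calc |∫ b, h b ∂μ| ≤ ∫ b, |h b| ∂μ := by
          simpa [Real.norm_eq_abs] using norm_integral_le_integral_norm (μ := μ) h
    _ ≤ ∫ _, M ∂μ := integral_mono hi.abs (integrable_const M) hb
    _ = M := by simp
  · rw [integral_undef hi]; simpa using hM0

lemma integral_eq_shift {μ : Measure β} [IsProbabilityMeasure μ] {H : β → ℝ}
    (hH : Measurable H) {M : ℝ} (hM : ∀ b, |H b| ≤ M) :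
    ∫ b, H b ∂μ = (∫⁻ b, ENNReal.ofReal (H b + M) ∂μ).toReal - M := by
  have h1 : ∫ b, (H b + M) ∂μ = (∫⁻ b, ENNReal.ofReal (H b + M) ∂μ).toReal :=
    integral_eq_lintegral_of_nonneg_ae (ae_of_all μ fun b => by
      simp only [Pi.zero_apply]; linarith [(abs_le.1 (hM b)).1])
      ((hH.add measurable_const)).aestronglyMeasurable
  have h2 : ∫ b, (H b + M) ∂μ = (∫ b, H b ∂μ) + M := by
    rw [integral_add (integrable_of_bdd' hH.aestronglyMeasurable hM) (integrable_const M),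
      integral_const]
    simp
  linarith

lemma lintegral_shift_le {μ : Measure β} [IsProbabilityMeasure μ] {H : β → ℝ}
    {M : ℝ} (hM : ∀ b, |H b| ≤ M) :
    ∫⁻ b, ENNReal.ofReal (H b + M) ∂μ ≤ ENNReal.ofReal (2 * M) := by
  calc ∫⁻ b, ENNReal.ofReal (H b + M) ∂μ ≤ ∫⁻ _, ENNReal.ofReal (2 * M) ∂μ :=
      lintegral_mono fun b => ENNReal.ofReal_le_ofReal (by linarith [(abs_le.1 (hM b)).2])
  _ = ENNReal.ofReal (2 * M) := by simp

lemma measurable_integral_param {κ : α → Measure β} (hκ : Measurable κ)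
    [∀ a, IsProbabilityMeasure (κ a)] {H : β → ℝ} (hH : Measurable H)
    {M : ℝ} (hM : ∀ b, |H b| ≤ M) :
    Measurable fun a => ∫ b, H b ∂ κ a := by
  have he : (fun a => ∫ b, H b ∂ κ a)
      = fun a => (∫⁻ b, ENNReal.ofReal (H b + M) ∂ κ a).toReal - M :=
    funext fun a => integral_eq_shift hH hM
  rw [he]
  exact (ENNReal.measurable_toReal.comp ((Measure.measurable_lintegral
    (ENNReal.measurable_ofReal.comp (hH.add measurable_const))).comp hκ)).sub measurable_const

lemma isProbabilityMeasure_bind {μ : Measure α} [IsProbabilityMeasure μ]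
    {κ : α → Measure β} (hκ : Measurable κ) [∀ a, IsProbabilityMeasure (κ a)] :
    IsProbabilityMeasure (μ.bind κ) := by
  constructor
  rw [Measure.bind_apply MeasurableSet.univ hκ.aemeasurable]
  simp

lemma integral_bind_bdd {μ : Measure α} [IsProbabilityMeasure μ]
    {κ : α → Measure β} (hκ : Measurable κ) [∀ a, IsProbabilityMeasure (κ a)]
    {H : β → ℝ} (hH : Measurable H) {M : ℝ} (hM : ∀ b, |H b| ≤ M) :
    ∫ b, H b ∂ (μ.bind κ) = ∫ a, (∫ b, H b ∂ κ a) ∂ μ := by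
  haveI := isProbabilityMeasure_bind (μ := μ) hκ
  have hmeas0 : Measurable fun b => ENNReal.ofReal (H b + M) :=
    ENNReal.measurable_ofReal.comp (hH.add measurable_const)
  have hmeasG : Measurable fun a => (∫⁻ b, ENNReal.ofReal (H b + M) ∂ κ a) :=
    (Measure.measurable_lintegral hmeas0).comp hκ
  have hGle : ∀ a, (∫⁻ b, ENNReal.ofReal (H b + M) ∂ κ a) ≤ ENNReal.ofReal (2 * M) :=
    fun a => lintegral_shift_le hM
  have hGne : ∀ a, (∫⁻ b, ENNReal.ofReal (H b + M) ∂ κ a) ≠ ⊤ :=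
    fun a => ((hGle a).trans_lt ENNReal.ofReal_lt_top).ne
  rw [integral_eq_shift hH hM, Measure.lintegral_bind hκ.aemeasurable hmeas0.aemeasurable]
  have he : (fun a => ∫ b, H b ∂ κ a)
      = fun a => (∫⁻ b, ENNReal.ofReal (H b + M) ∂ κ a).toReal - M :=
    funext fun a => integral_eq_shift hH hM
  rw [he]
  have hint : Integrable (fun a => (∫⁻ b, ENNReal.ofReal (H b + M) ∂ κ a).toReal) μ := by
    refine integrable_of_bdd' (M := (ENNReal.ofReal (2 * M)).toReal)
      (ENNReal.measurable_toReal.comp hmeasG).aestronglyMeasurable fun a => ?_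
    rw [abs_of_nonneg ENNReal.toReal_nonneg]
    exact ENNReal.toReal_mono ENNReal.ofReal_ne_top (hGle a)
  rw [integral_sub hint (integrable_const M), integral_const]
  have : ∫ a, (∫⁻ b, ENNReal.ofReal (H b + M) ∂ κ a).toReal ∂ μ
      = (∫⁻ a, ∫⁻ b, ENNReal.ofReal (H b + M) ∂ κ a ∂ μ).toReal := by
    rw [integral_eq_lintegral_of_nonneg_ae (ae_of_all μ fun a => ENNReal.toReal_nonneg)
      (ENNReal.measurable_toReal.comp hmeasG).aestronglyMeasurable]
    congr 1
    exact lintegral_congr fun a => ENNReal.ofReal_toReal (hGne a)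
  rw [this]
  simp

lemma tvDist_bddAbove {μ ν : Measure β} [IsProbabilityMeasure μ] [IsProbabilityMeasure ν] :
    BddAbove (Set.range fun B : {B : Set β // MeasurableSet B} =>
      |(μ B.1).toReal - (ν B.1).toReal|) := by
  refine ⟨1, ?_⟩
  rintro x ⟨B, rfl⟩
  have h1 : (μ B.1).toReal ≤ 1 := by
    simpa using ENNReal.toReal_mono ENNReal.one_ne_top prob_le_one
  have h2 : (ν B.1).toReal ≤ 1 := by
    simpa using ENNReal.toReal_mono ENNReal.one_ne_top prob_le_one
  have h3 : 0 ≤ (μ B.1).toReal := ENNReal.toReal_nonneg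
  have h4 : 0 ≤ (ν B.1).toReal := ENNReal.toReal_nonneg
  rw [abs_sub_le_iff]
  constructor <;> linarith

lemma le_tvDist {μ ν : Measure β} [IsProbabilityMeasure μ] [IsProbabilityMeasure ν]
    {B : Set β} (hB : MeasurableSet B) :
    |(μ B).toReal - (ν B).toReal| ≤ tvDist μ ν :=
  le_ciSup tvDist_bddAbove (⟨B, hB⟩ : {B : Set β // MeasurableSet B})

lemma abs_integral_sub_le_tv {μ ν : Measure β} [IsProbabilityMeasure μ] [IsProbabilityMeasure ν]
    {g : β → ℝ} (hg : Measurable g) {M : ℝ} (hM : ∀ b, |g b| ≤ M) :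
    |(∫ b, g b ∂μ) - ∫ b, g b ∂ν| ≤ 2 * M * tvDist μ ν := by
  set ρ : Measure β := μ + ν with hρ
  have hμρ : μ ≪ ρ := Measure.absolutelyContinuous_of_le (Measure.le_add_right le_rfl)
  have hνρ : ν ≪ ρ := Measure.absolutelyContinuous_of_le (Measure.le_add_left le_rfl)
  set dμ : β → ℝ := fun b => (μ.rnDeriv ρ b).toReal with hdμdef
  set dν : β → ℝ := fun b => (ν.rnDeriv ρ b).toReal with hdνdef
  have hdμ : Measurable dμ := (Measure.measurable_rnDeriv μ ρ).ennreal_toReal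
  have hdν : Measurable dν := (Measure.measurable_rnDeriv ν ρ).ennreal_toReal
  have hidμ : Integrable dμ ρ := Measure.integrable_toReal_rnDeriv
  have hidν : Integrable dν ρ := Measure.integrable_toReal_rnDeriv
  have hint1 : Integrable (fun b => dμ b • g b) ρ :=
    (MeasureTheory.integrable_rnDeriv_smul_iff hμρ).2 (integrable_of_bdd' hg.aestronglyMeasurable hM)
  have hint2 : Integrable (fun b => dν b • g b) ρ :=
    (MeasureTheory.integrable_rnDeriv_smul_iff hνρ).2 (integrable_of_bdd' hg.aestronglyMeasurable hM)
  have e1 : ∫ b, g b ∂μ = ∫ b, dμ b • g b ∂ρ := (MeasureTheory.integral_rnDeriv_smul hμρ).symm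
  have e2 : ∫ b, g b ∂ν = ∫ b, dν b • g b ∂ρ := (MeasureTheory.integral_rnDeriv_smul hνρ).symm
  have hdiff : (∫ b, g b ∂μ) - ∫ b, g b ∂ν = ∫ b, (dμ b - dν b) * g b ∂ρ := by
    rw [e1, e2, ← integral_sub hint1 hint2]
    congr 1; funext b; simp [smul_eq_mul]; ring
  -- bound |dμ - dν| integral by 2 * tvDist
  set B : Set β := {b | dν b ≤ dμ b} with hBdef
  have hBmeas : MeasurableSet B := measurableSet_le hdν hdμ
  have habs_int : Integrable (fun b => |dμ b - dν b|) ρ := (hidμ.sub hidν).abs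
  have hsplit : ∫ b, |dμ b - dν b| ∂ρ
      = (∫ b in B, (dμ b - dν b) ∂ρ) + ∫ b in Bᶜ, (dν b - dμ b) ∂ρ := by
    rw [← integral_add_compl hBmeas habs_int]
    congr 1
    · refine setIntegral_congr_fun hBmeas fun b hb => ?_
      exact abs_of_nonneg (sub_nonneg.2 hb)
    · refine setIntegral_congr_fun hBmeas.compl fun b hb => ?_
      have : dμ b < dν b := not_le.1 hb
      rw [abs_of_neg (by linarith)]; ring
  have hsB : ∫ b in B, (dμ b - dν b) ∂ρ = (μ B).toReal - (ν B).toReal := by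
    rw [integral_sub (hidμ.restrict) (hidν.restrict),
      Measure.setIntegral_toReal_rnDeriv hμρ B, Measure.setIntegral_toReal_rnDeriv hνρ B]; rfl
  have hsBc : ∫ b in Bᶜ, (dν b - dμ b) ∂ρ = (ν Bᶜ).toReal - (μ Bᶜ).toReal := by
    rw [integral_sub (hidν.restrict) (hidμ.restrict),
      Measure.setIntegral_toReal_rnDeriv hμρ Bᶜ, Measure.setIntegral_toReal_rnDeriv hνρ Bᶜ]; rfl
  have hb1 : (μ B).toReal - (ν B).toReal ≤ tvDist μ ν :=
    (le_abs_self _).trans (le_tvDist hBmeas)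
  have hb2 : (ν Bᶜ).toReal - (μ Bᶜ).toReal ≤ tvDist μ ν :=
    calc (ν Bᶜ).toReal - (μ Bᶜ).toReal ≤ |(ν Bᶜ).toReal - (μ Bᶜ).toReal| := le_abs_self _
    _ = |(μ Bᶜ).toReal - (ν Bᶜ).toReal| := abs_sub_comm _ _
    _ ≤ tvDist μ ν := le_tvDist hBmeas.compl
  have habs2 : ∫ b, |dμ b - dν b| ∂ρ ≤ 2 * tvDist μ ν := by
    rw [hsplit, hsB, hsBc]; linarith
  have hM0 : 0 ≤ M := by
    have hne : Nonempty β := by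
      by_contra h
      rw [not_nonempty_iff] at h
      have h1 : μ Set.univ = 1 := measure_univ
      rw [Set.univ_eq_empty_iff.2 h] at h1
      simp at h1
    obtain ⟨b⟩ := hne
    exact (abs_nonneg _).trans (hM b)
  have hIntprod : Integrable (fun b => (dμ b - dν b) * g b) ρ := by
    have := hint1.sub hint2
    simpa [smul_eq_mul, sub_mul, Pi.sub_def] using this
  have hfinal : |∫ b, (dμ b - dν b) * g b ∂ρ| ≤ M * ∫ b, |dμ b - dν b| ∂ρ := by
    calc |∫ b, (dμ b - dν b) * g b ∂ρ| ≤ ∫ b, |dμ b - dν b| * |g b| ∂ρ := by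
          simpa [Real.norm_eq_abs, abs_mul] using
            norm_integral_le_integral_norm (μ := ρ) (fun b => (dμ b - dν b) * g b)
    _ ≤ ∫ b, |dμ b - dν b| * M ∂ρ := by
        refine integral_mono ?_ (habs_int.mul_const M) fun b => ?_
        · simpa [abs_mul] using hIntprod.abs
        · exact mul_le_mul_of_nonneg_left (hM b) (abs_nonneg _)
    _ = M * ∫ b, |dμ b - dν b| ∂ρ := by rw [← integral_const_mul]; congr 1; funext b; ring
  have htv0 : 0 ≤ tvDist μ ν := by
    have := le_tvDist (μ := μ) (ν := ν) MeasurableSet.empty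
    simpa using this
  calc |(∫ b, g b ∂μ) - ∫ b, g b ∂ν| = |∫ b, (dμ b - dν b) * g b ∂ρ| := by rw [hdiff]
  _ ≤ M * ∫ b, |dμ b - dν b| ∂ρ := hfinal
  _ ≤ M * (2 * tvDist μ ν) := mul_le_mul_of_nonneg_left habs2 hM0
  _ = 2 * M * tvDist μ ν := by ring

end Aux

section Path

variable {E : Type*}

lemma measurable_prepend [MeasurableSpace E] (x : E) : Measurable (prepend x) := by
  apply measurable_pi_lambda
  intro n
  cases n with
  | zero => exact measurable_const
  | succ k => exact measurable_pi_apply k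

/-- `H` depends only on the first `N` coordinates. -/
def DepOn {γ : Type*} (N : ℕ) (H : (ℕ → E) → γ) : Prop :=
  ∀ ω₁ ω₂ : ℕ → E, (∀ i, i < N → ω₁ i = ω₂ i) → H ω₁ = H ω₂

lemma hitTime_eq_coe_iff {B : Set E} {ω : ℕ → E} {a : ℕ} :
    hitTime B ω = (a : ℕ∞) ↔ ω a ∈ B ∧ ∀ i, i < a → ω i ∉ B := by
  constructor
  · intro h
    have hle : ∀ i : ℕ, ω i ∈ B → (a : ℕ∞) ≤ (i : ℕ∞) := by
      intro i hi
      rw [← h]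
      exact iInf₂_le i hi
    have hnot : ∀ i, i < a → ω i ∉ B := fun i hia hiB =>
      absurd (Nat.cast_le.mp (hle i hiB)) (Nat.not_le.mpr hia)
    refine ⟨?_, hnot⟩
    by_contra haB
    have h2 : ((a + 1 : ℕ) : ℕ∞) ≤ hitTime B ω := by
      refine le_iInf₂ fun i hi => ?_
      have hai : a < i := lt_of_le_of_ne (Nat.cast_le.mp (hle i hi))
        (by rintro rfl; exact haB hi)
      exact Nat.cast_le.mpr hai
    rw [h] at h2
    have := Nat.cast_le.mp h2
    omega
  · rintro ⟨haB, hnot⟩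
    refine le_antisymm (iInf₂_le a haB) (le_iInf₂ fun i hi => ?_)
    exact Nat.cast_le.mpr (Nat.le_of_not_lt fun h => hnot i h hi)

lemma tauR_eq_coe_iff {R R1 : Set E} {ω : ℕ → E} {k : ℕ} :
    tauR R R1 ω = (k : ℕ∞) ↔ ∃ a b : ℕ, a + b = k ∧ hitTime R1ᶜ ω = (a : ℕ∞) ∧
      hitTime R (fun n => ω (a + n)) = (b : ℕ∞) := by
  constructor
  · intro h
    have h1 : hitTime R1ᶜ ω ≠ ⊤ := by
      intro htop
      rw [tauR, htop, top_add] at h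
      exact (ENat.top_ne_coe k) h
    obtain ⟨a, ha⟩ := WithTop.ne_top_iff_exists.mp h1
    have ha' : hitTime R1ᶜ ω = (a : ℕ∞) := by exact_mod_cast ha.symm
    rw [tauR, ha'] at h
    have hta : ((a : ℕ∞)).toNat = a := by simp
    rw [hta] at h
    have h2 : hitTime R (fun n => ω (a + n)) ≠ ⊤ := by
      intro htop
      rw [htop, add_top] at h
      exact (ENat.top_ne_coe k) h
    obtain ⟨b, hb⟩ := WithTop.ne_top_iff_exists.mp h2
    have hb' : hitTime R (fun n => ω (a + n)) = (b : ℕ∞) := by exact_mod_cast hb.symm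
    rw [hb'] at h
    refine ⟨a, b, ?_, ha', hb'⟩
    exact_mod_cast h
  · rintro ⟨a, b, rfl, h1, h2⟩
    rw [tauR, h1]
    have hta : ((a : ℕ∞)).toNat = a := by simp
    rw [hta, h2]
    exact_mod_cast rfl

lemma tauR_eq_coe_congr {R R1 : Set E} {ω₁ ω₂ : ℕ → E} {k : ℕ}
    (h : ∀ i, i ≤ k → ω₁ i = ω₂ i) :
    tauR R R1 ω₁ = (k : ℕ∞) ↔ tauR R R1 ω₂ = (k : ℕ∞) := by
  have aux : ∀ ω₁ ω₂ : ℕ → E, (∀ i, i ≤ k → ω₁ i = ω₂ i) →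
      tauR R R1 ω₁ = (k : ℕ∞) → tauR R R1 ω₂ = (k : ℕ∞) := by
    intro ω₁ ω₂ h ht
    rw [tauR_eq_coe_iff] at ht ⊢
    obtain ⟨a, b, hab, h1, h2⟩ := ht
    refine ⟨a, b, hab, ?_, ?_⟩
    · rw [hitTime_eq_coe_iff] at h1 ⊢
      exact ⟨by rw [← h a (by omega)]; exact h1.1,
        fun i hi => by rw [← h i (by omega)]; exact h1.2 i hi⟩
    · rw [hitTime_eq_coe_iff] at h2 ⊢
      refine ⟨by rw [show ω₂ (a + b) = ω₁ (a + b) from (h (a+b) (by omega)).symm]; exact h2.1,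
        fun j hj => ?_⟩
      rw [show ω₂ (a + j) = ω₁ (a + j) from (h (a+j) (by omega)).symm]
      exact h2.2 j hj
  exact ⟨aux ω₁ ω₂ h, aux ω₂ ω₁ fun i hi => (h i hi).symm⟩

variable [MeasurableSpace E]

lemma measurableSet_hitTime_shift {B : Set E} (hB : MeasurableSet B) (a b : ℕ) :
    MeasurableSet {ω : ℕ → E | hitTime B (fun n => ω (a + n)) = (b : ℕ∞)} := by
  have heq : {ω : ℕ → E | hitTime B (fun n => ω (a + n)) = (b : ℕ∞)}
      = (fun ω : ℕ → E => ω (a + b)) ⁻¹' B ∩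
        ⋂ (i : ℕ), ⋂ (_ : i < b), (fun ω : ℕ → E => ω (a + i)) ⁻¹' Bᶜ := by
    ext ω
    simp only [Set.mem_setOf_eq, hitTime_eq_coe_iff, Set.mem_inter_iff, Set.mem_preimage,
      Set.mem_iInter, Set.mem_compl_iff]
  rw [heq]
  exact (measurable_pi_apply (a + b) hB).inter
    (MeasurableSet.iInter fun i => MeasurableSet.iInter fun _ =>
      measurable_pi_apply (a + i) hB.compl)

lemma measurableSet_hitTime {B : Set E} (hB : MeasurableSet B) (a : ℕ) :
    MeasurableSet {ω : ℕ → E | hitTime B ω = (a : ℕ∞)} := by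
  have hEq : ∀ ω : ℕ → E, (fun n => ω (0 + n)) = ω := fun ω => funext fun n => by
    rw [Nat.zero_add]
  simpa [hEq] using measurableSet_hitTime_shift hB 0 a

lemma measurableSet_tauR_eq {R R1 : Set E} (hR : MeasurableSet R) (hR1 : MeasurableSet R1)
    (k : ℕ) : MeasurableSet {ω : ℕ → E | tauR R R1 ω = (k : ℕ∞)} := by
  have heq : {ω : ℕ → E | tauR R R1 ω = (k : ℕ∞)} =
      ⋃ (a : ℕ), ⋃ (_ : a < k + 1), ({ω : ℕ → E | hitTime R1ᶜ ω = (a : ℕ∞)} ∩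
        {ω : ℕ → E | hitTime R (fun n => ω (a + n)) = ((k - a : ℕ) : ℕ∞)}) := by
    ext ω
    simp only [Set.mem_setOf_eq, tauR_eq_coe_iff, Set.mem_iUnion, Set.mem_inter_iff]
    constructor
    · rintro ⟨a, b, hab, h1, h2⟩
      exact ⟨a, by omega, h1, by rw [show k - a = b by omega]; exact h2⟩
    · rintro ⟨a, ha, h1, h2⟩
      exact ⟨a, k - a, by omega, h1, h2⟩
  rw [heq]
  exact MeasurableSet.iUnion fun a => MeasurableSet.iUnion fun _ =>
    (measurableSet_hitTime hR1.compl a).inter (measurableSet_hitTime_shift hR a _)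

lemma measurableSet_tauR_top {R R1 : Set E} (hR : MeasurableSet R) (hR1 : MeasurableSet R1) :
    MeasurableSet {ω : ℕ → E | tauR R R1 ω = (⊤ : ℕ∞)} := by
  have heq : {ω : ℕ → E | tauR R R1 ω = (⊤ : ℕ∞)} =
      (⋃ k : ℕ, {ω : ℕ → E | tauR R R1 ω = (k : ℕ∞)})ᶜ := by
    ext ω
    simp only [Set.mem_setOf_eq, Set.mem_compl_iff, Set.mem_iUnion, not_exists]
    cases hτ : tauR R R1 ω using ENat.recTopCoe with
    | top => simp
    | coe m => simp
  rw [heq]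
  exact (MeasurableSet.iUnion fun k => measurableSet_tauR_eq hR hR1 k).compl

end Path

section Trunc

variable {E : Type*}

/-- Truncated entrance time (equals `N` when `τ = ∞`). -/
noncomputable def truncT (R R1 : Set E) (N : ℕ) (ω : ℕ → E) : ℕ :=
  ((tauR R R1 ω) ⊓ (N : ℕ∞)).toNat

lemma truncT_le (R R1 : Set E) (N : ℕ) (ω : ℕ → E) : truncT R R1 N ω ≤ N :=
  ENat.toNat_le_of_le_coe inf_le_right

lemma truncT_of_coe {R R1 : Set E} {ω : ℕ → E} {m : ℕ} (h : tauR R R1 ω = (m : ℕ∞)) (N : ℕ) :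
    truncT R R1 N ω = min m N := by
  rw [truncT, h]
  rcases le_total m N with hmn | hnm
  · rw [inf_eq_left.mpr (Nat.cast_le.mpr hmn), min_eq_left hmn]; simp
  · rw [inf_eq_right.mpr (Nat.cast_le.mpr hnm), min_eq_right hnm]; simp

lemma truncT_of_top {R R1 : Set E} {ω : ℕ → E} (h : tauR R R1 ω = (⊤ : ℕ∞)) (N : ℕ) :
    truncT R R1 N ω = N := by
  rw [truncT, h, top_inf_eq]; simp

lemma truncT_eq_iff {R R1 : Set E} {ω : ℕ → E} {N j : ℕ} :
    truncT R R1 N ω = j ↔ ((j < N ∧ tauR R R1 ω = (j : ℕ∞)) ∨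
      (j = N ∧ ∀ i : ℕ, i < N → tauR R R1 ω ≠ (i : ℕ∞))) := by
  cases hτ : tauR R R1 ω using ENat.recTopCoe with
  | top =>
    rw [truncT_of_top hτ]
    constructor
    · intro hNj
      exact Or.inr ⟨hNj.symm, fun i _ h => (ENat.top_ne_coe i) h⟩
    · rintro (⟨_, h⟩ | ⟨hjN, _⟩)
      · exact absurd h (ENat.top_ne_coe j)
      · exact hjN.symm
  | coe m =>
    rw [truncT_of_coe hτ]
    constructor
    · intro h
      rcases lt_or_ge m N with hmN | hmN
      · refine Or.inl ⟨by omega, ?_⟩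
        have : m = j := by omega
        exact_mod_cast congrArg (Nat.cast : ℕ → ℕ∞) this
      · refine Or.inr ⟨by omega, fun i hi hmi => ?_⟩
        have : m = i := by exact_mod_cast hmi
        omega
    · rintro (⟨h1, h2⟩ | ⟨hjN, h2⟩)
      · have : m = j := by exact_mod_cast h2
        omega
      · have hnm : ¬ m < N := fun hlt => h2 m hlt rfl
        omega

variable [MeasurableSpace E]

lemma measurable_truncT {R R1 : Set E} (hR : MeasurableSet R) (hR1 : MeasurableSet R1) (N : ℕ) :
    Measurable (truncT R R1 N) := by
  apply measurable_to_countable'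
  intro j
  by_cases hjN : j < N
  · have heq : truncT R R1 N ⁻¹' {j} = {ω : ℕ → E | tauR R R1 ω = (j : ℕ∞)} := by
      ext ω
      simp only [Set.mem_preimage, Set.mem_singleton_iff, truncT_eq_iff, Set.mem_setOf_eq]
      constructor
      · rintro (⟨_, h⟩ | ⟨rfl, _⟩)
        · exact h
        · omega
      · intro h; exact Or.inl ⟨hjN, h⟩
    rw [heq]
    exact measurableSet_tauR_eq hR hR1 j
  · by_cases hjN' : j = N
    · subst hjN'
      have heq : truncT R R1 j ⁻¹' {j} =
          ⋂ (i : ℕ), ⋂ (_ : i < j), {ω : ℕ → E | tauR R R1 ω = (i : ℕ∞)}ᶜ := by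
        ext ω
        simp only [Set.mem_preimage, Set.mem_singleton_iff, truncT_eq_iff, Set.mem_iInter,
          Set.mem_compl_iff, Set.mem_setOf_eq]
        constructor
        · rintro (⟨h1, _⟩ | ⟨_, h2⟩)
          · omega
          · exact fun i hi => h2 i hi
        · intro h; exact Or.inr ⟨trivial, h⟩
      rw [heq]
      exact MeasurableSet.iInter fun i => MeasurableSet.iInter fun _ =>
        (measurableSet_tauR_eq hR hR1 i).compl
    · have heq : truncT R R1 N ⁻¹' {j} = ∅ := by
        ext ω
        simp only [Set.mem_preimage, Set.mem_singleton_iff, truncT_eq_iff, Set.mem_empty_iff_false,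
          iff_false]
        rintro (⟨h1, _⟩ | ⟨h2, _⟩) <;> omega
      rw [heq]
      exact MeasurableSet.empty

lemma measurable_fullT {R R1 : Set E} (hR : MeasurableSet R) (hR1 : MeasurableSet R1) :
    Measurable (fun ω : ℕ → E => (tauR R R1 ω).toNat) := by
  apply measurable_to_countable'
  intro j
  rcases Nat.eq_zero_or_pos j with rfl | hj
  · have heq : (fun ω : ℕ → E => (tauR R R1 ω).toNat) ⁻¹' {0} =
        {ω : ℕ → E | tauR R R1 ω = ((0 : ℕ) : ℕ∞)} ∪ {ω : ℕ → E | tauR R R1 ω = (⊤ : ℕ∞)} := by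
      ext ω
      simp only [Set.mem_preimage, Set.mem_singleton_iff, Set.mem_union, Set.mem_setOf_eq,
        ENat.toNat_eq_zero]
      norm_cast
    rw [heq]
    exact (measurableSet_tauR_eq hR hR1 0).union (measurableSet_tauR_top hR hR1)
  · have heq : (fun ω : ℕ → E => (tauR R R1 ω).toNat) ⁻¹' {j} =
        {ω : ℕ → E | tauR R R1 ω = (j : ℕ∞)} := by
      ext ω
      simp only [Set.mem_preimage, Set.mem_singleton_iff, Set.mem_setOf_eq]
      cases hτ : tauR R R1 ω using ENat.recTopCoe with
      | top => simp; omega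
      | coe m => simp [Nat.cast_inj]
    rw [heq]
    exact measurableSet_tauR_eq hR hR1 j

lemma measurable_sumT {t : (ℕ → E) → ℕ} (ht : Measurable t) {g : E → ℝ} (hg : Measurable g) :
    Measurable fun ω => ∑ i ∈ Finset.range (t ω), g (ω i) := by
  have h : Measurable fun p : (ℕ → E) × ℕ => ∑ i ∈ Finset.range p.2, g (p.1 i) := by
    apply measurable_from_prod_countable_left
    intro k
    show Measurable fun ω : ℕ → E => ∑ i ∈ Finset.range k, g (ω i)
    exact Finset.measurable_sum _ fun i _ => hg.comp (measurable_pi_apply i)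
  exact h.comp (measurable_id.prodMk ht)

lemma depOn_truncT {R R1 : Set E} {N : ℕ} : DepOn (N + 1) (truncT R R1 N) := by
  intro ω₁ ω₂ h
  have hcongr : ∀ j : ℕ, j ≤ N → (tauR R R1 ω₁ = (j : ℕ∞) ↔ tauR R R1 ω₂ = (j : ℕ∞)) :=
    fun j hj => tauR_eq_coe_congr fun i hi => h i (by omega)
  have h1 := (truncT_eq_iff (R := R) (R1 := R1) (ω := ω₁) (N := N)
    (j := truncT R R1 N ω₁)).mp rfl
  have h2 : truncT R R1 N ω₂ = truncT R R1 N ω₁ := by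
    rw [truncT_eq_iff]
    rcases h1 with ⟨hj, ht⟩ | ⟨hj, ht⟩
    · exact Or.inl ⟨hj, (hcongr _ (le_of_lt hj)).mp ht⟩
    · exact Or.inr ⟨hj, fun i hi hti => ht i hi ((hcongr i (le_of_lt hi)).mpr hti)⟩
  exact h2.symm

lemma depOn_sumTrunc {R R1 : Set E} {N : ℕ} (g : E → ℝ) :
    DepOn (N + 1) (fun ω : ℕ → E => ∑ i ∈ Finset.range (truncT R R1 N ω), g (ω i)) := by
  intro ω₁ ω₂ h
  show (∑ i ∈ Finset.range (truncT R R1 N ω₁), g (ω₁ i))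
      = ∑ i ∈ Finset.range (truncT R R1 N ω₂), g (ω₂ i)
  rw [depOn_truncT ω₁ ω₂ h]
  refine Finset.sum_congr rfl fun i hi => ?_
  have hi' : i < truncT R R1 N ω₂ := Finset.mem_range.mp hi
  have := truncT_le R R1 N ω₂
  rw [h i (by omega)]

end Trunc

section Key

lemma key_induction {E : Type*} [MeasurableSpace E]
    (κn : ℕ → Kernel E E) (κl : Kernel E E)
    [∀ n, IsMarkovKernel (κn n)] [IsMarkovKernel κl]
    (htv : ∀ x, Tendsto (fun n => tvDist (κn n x) (κl x)) atTop (nhds 0))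
    (Pln : ℕ → E → Measure (ℕ → E)) (Plu : E → Measure (ℕ → E))
    (hPln : ∀ n, IsPathLaw (κn n) (Pln n)) (hPlu : IsPathLaw κl Plu) :
    ∀ (N : ℕ) (M : ℝ) (H : ℕ → (ℕ → E) → ℝ) (Hl : (ℕ → E) → ℝ),
      (∀ n, Measurable (H n)) → Measurable Hl →
      (∀ n ω, |H n ω| ≤ M) → (∀ ω, |Hl ω| ≤ M) →
      (∀ n, DepOn N (H n)) → DepOn N Hl →
      (∀ ω, Tendsto (fun n => H n ω) atTop (nhds (Hl ω))) →
      ∀ x, Tendsto (fun n => ∫ ω, H n ω ∂ (Pln n x)) atTop (nhds (∫ ω, Hl ω ∂ (Plu x))) := by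
  have hPn : ∀ n y, IsProbabilityMeasure (Pln n y) := fun n y => (hPln n).2.1 y
  have hPu : ∀ y, IsProbabilityMeasure (Plu y) := fun y => hPlu.2.1 y
  intro N
  induction N with
  | zero =>
    intro M H Hl hHm hHlm hHb hHlb hdep hdepl hconv x
    haveI := hPn
    haveI := hPu x
    have e1 : ∀ n, ∫ ω, H n ω ∂ (Pln n x) = H n (fun _ => x) := by
      intro n
      haveI := hPn n x
      rw [integral_congr_ae (ae_of_all _ fun ω => hdep n ω (fun _ => x)
        fun i hi => absurd hi (Nat.not_lt_zero i)), integral_const]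
      simp
    have e2 : ∫ ω, Hl ω ∂ (Plu x) = Hl (fun _ => x) := by
      rw [integral_congr_ae (ae_of_all _ fun ω => hdepl ω (fun _ => x)
        fun i hi => absurd hi (Nat.not_lt_zero i)), integral_const]
      simp
    simp only [e1, e2]
    exact hconv (fun _ => x)
  | succ N ih =>
    intro M H Hl hHm hHlm hHb hHlb hdep hdepl hconv x
    haveI := hPu x
    have hM0 : 0 ≤ M := le_trans (abs_nonneg _) (hHlb (fun _ => x))
    have hHpm : ∀ n, Measurable fun ω => H n (prepend x ω) :=
      fun n => (hHm n).comp (measurable_prepend x)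
    have hHlpm : Measurable fun ω => Hl (prepend x ω) := hHlm.comp (measurable_prepend x)
    set G : ℕ → E → ℝ := fun n y => ∫ ω, H n (prepend x ω) ∂ (Pln n y) with hGdef
    set Gl : E → ℝ := fun y => ∫ ω, Hl (prepend x ω) ∂ (Plu y) with hGldef
    have hGb : ∀ n y, |G n y| ≤ M := fun n y => by
      haveI := hPn n y
      exact abs_integral_le_of_bdd hM0 fun ω => hHb n (prepend x ω)
    have hGlb : ∀ y, |Gl y| ≤ M := fun y => by
      haveI := hPu y
      exact abs_integral_le_of_bdd hM0 fun ω => hHlb (prepend x ω)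
    have hGm : ∀ n, Measurable (G n) := fun n => by
      haveI : ∀ a, IsProbabilityMeasure (Pln n a) := hPn n
      exact measurable_integral_param (hPln n).1 (hHpm n) (fun ω => hHb n (prepend x ω))
    have hGlm : Measurable Gl := by
      haveI : ∀ a, IsProbabilityMeasure (Plu a) := hPu
      exact measurable_integral_param hPlu.1 hHlpm (fun ω => hHlb (prepend x ω))
    have hGconv : ∀ y, Tendsto (fun n => G n y) atTop (nhds (Gl y)) := by
      intro y
      refine ih M (fun n ω => H n (prepend x ω)) (fun ω => Hl (prepend x ω)) hHpm hHlpm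
        (fun n ω => hHb n _) (fun ω => hHlb _) ?_ ?_ (fun ω => hconv (prepend x ω)) y
      · intro n ω₁ ω₂ hag
        exact hdep n _ _ fun i hi => by
          cases i with
          | zero => rfl
          | succ j => exact hag j (by omega)
      · intro ω₁ ω₂ hag
        exact hdepl _ _ fun i hi => by
          cases i with
          | zero => rfl
          | succ j => exact hag j (by omega)
    have hrecn : ∀ n, ∫ ω, H n ω ∂ (Pln n x) = ∫ y, G n y ∂ (κn n x) := by
      intro n
      haveI : ∀ a, IsProbabilityMeasure (Pln n a) := hPn n
      conv_lhs => rw [(hPln n).2.2 x]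
      rw [integral_map (measurable_prepend x).aemeasurable (hHm n).aestronglyMeasurable,
        integral_bind_bdd (hPln n).1 (hHpm n) (fun ω => hHb n (prepend x ω))]
    have hrecl : ∫ ω, Hl ω ∂ (Plu x) = ∫ y, Gl y ∂ (κl x) := by
      haveI : ∀ a, IsProbabilityMeasure (Plu a) := hPu
      conv_lhs => rw [hPlu.2.2 x]
      rw [integral_map (measurable_prepend x).aemeasurable hHlm.aestronglyMeasurable,
        integral_bind_bdd hPlu.1 hHlpm (fun ω => hHlb (prepend x ω))]
    simp only [hrecn, hrecl]
    have hterm2 : Tendsto (fun n => ∫ y, G n y ∂ (κl x)) atTop (nhds (∫ y, Gl y ∂ (κl x))) := by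
      refine tendsto_integral_of_dominated_convergence (fun _ => M)
        (fun n => (hGm n).aestronglyMeasurable) (integrable_const M)
        (fun n => ae_of_all _ fun y => ?_) (ae_of_all _ hGconv)
      rw [Real.norm_eq_abs]; exact hGb n y
    rw [tendsto_iff_dist_tendsto_zero]
    have hbound : ∀ n, dist (∫ y, G n y ∂ (κn n x)) (∫ y, Gl y ∂ (κl x))
        ≤ 2 * M * tvDist (κn n x) (κl x)
          + dist (∫ y, G n y ∂ (κl x)) (∫ y, Gl y ∂ (κl x)) := by
      intro n
      calc dist (∫ y, G n y ∂ (κn n x)) (∫ y, Gl y ∂ (κl x))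
          ≤ dist (∫ y, G n y ∂ (κn n x)) (∫ y, G n y ∂ (κl x))
            + dist (∫ y, G n y ∂ (κl x)) (∫ y, Gl y ∂ (κl x)) := dist_triangle _ _ _
      _ ≤ 2 * M * tvDist (κn n x) (κl x)
            + dist (∫ y, G n y ∂ (κl x)) (∫ y, Gl y ∂ (κl x)) := by
          refine add_le_add_left ?_ _
          rw [Real.dist_eq]
          exact abs_integral_sub_le_tv (hGm n) (hGb n)
    have hz : Tendsto (fun n => 2 * M * tvDist (κn n x) (κl x)
        + dist (∫ y, G n y ∂ (κl x)) (∫ y, Gl y ∂ (κl x))) atTop (nhds 0) := by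
      have t1 : Tendsto (fun n => 2 * M * tvDist (κn n x) (κl x)) atTop (nhds 0) := by
        simpa using (htv x).const_mul (2 * M)
      have t2 := tendsto_iff_dist_tendsto_zero.mp hterm2
      simpa using t1.add t2
    exact squeeze_zero (fun n => dist_nonneg) hbound hz

end Key

section Tail

lemma tail_bound {E : Type*} [MeasurableSpace E] {R R1 : Set E}
    (hR : MeasurableSet R) (hR1 : MeasurableSet R1)
    (μ : Measure (ℕ → E)) [IsProbabilityMeasure μ] {C' : ℝ≥0∞} (hC' : C' ≠ ⊤)
    (hmom : ∫⁻ ω, ((tauR R R1 ω : ℝ≥0∞)) ^ 2 ∂μ ≤ C')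
    {g : E → ℝ} (hg : Measurable g) {C : ℝ} (hgb : ∀ y, |g y| ≤ C) {N : ℕ} (hN : 1 ≤ N) :
    |(∫ ω, (∑ i ∈ Finset.range ((tauR R R1 ω).toNat), g (ω i)) ∂μ)
      - ∫ ω, (∑ i ∈ Finset.range (truncT R R1 N ω), g (ω i)) ∂μ| ≤ C * C'.toReal / N := by
  have hNne : (N : ℝ≥0∞) ≠ 0 := by
    simp only [ne_eq, Nat.cast_eq_zero]; omega
  have hNnt : (N : ℝ≥0∞) ≠ ⊤ := ENNReal.natCast_ne_top N
  have hC0 : 0 ≤ C := by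
    have hne : Nonempty (ℕ → E) := by
      by_contra h
      rw [not_nonempty_iff] at h
      have h1 : μ Set.univ = 1 := measure_univ
      rw [Set.univ_eq_empty_iff.2 h] at h1
      simp at h1
    obtain ⟨ω⟩ := hne
    exact (abs_nonneg _).trans (hgb (ω 0))
  have hSm : Measurable fun ω : ℕ → E => ∑ i ∈ Finset.range ((tauR R R1 ω).toNat), g (ω i) :=
    measurable_sumT (measurable_fullT hR hR1) hg
  have hStm : Measurable fun ω : ℕ → E => ∑ i ∈ Finset.range (truncT R R1 N ω), g (ω i) :=
    measurable_sumT (measurable_truncT hR hR1 N) hg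
  have hdom : ∀ ω : ℕ → E, (((tauR R R1 ω).toNat : ℝ≥0∞)) ≤ ((tauR R R1 ω : ℝ≥0∞)) ^ 2 + 1 := by
    intro ω
    cases hτ : tauR R R1 ω using ENat.recTopCoe with
    | top => simp
    | coe m =>
      rw [ENat.toNat_coe, ENat.toENNReal_coe]
      have hnat : m ≤ m ^ 2 + 1 := by nlinarith
      exact_mod_cast hnat
  have hlin : ∫⁻ ω, (((tauR R R1 ω).toNat : ℝ≥0∞)) ∂μ ≤ C' + 1 := by
    calc ∫⁻ ω, (((tauR R R1 ω).toNat : ℝ≥0∞)) ∂μ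
        ≤ ∫⁻ ω, (((tauR R R1 ω : ℝ≥0∞)) ^ 2 + 1) ∂μ := lintegral_mono hdom
    _ = (∫⁻ ω, ((tauR R R1 ω : ℝ≥0∞)) ^ 2 ∂μ) + 1 := by
        rw [lintegral_add_right _ measurable_const]; simp
    _ ≤ C' + 1 := add_le_add_left hmom 1
  have hsumb : ∀ ω : ℕ → E, |∑ i ∈ Finset.range ((tauR R R1 ω).toNat), g (ω i)|
      ≤ C * ((tauR R R1 ω).toNat : ℝ) := by
    intro ω
    calc |∑ i ∈ Finset.range ((tauR R R1 ω).toNat), g (ω i)|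
        ≤ ∑ i ∈ Finset.range ((tauR R R1 ω).toNat), |g (ω i)| := Finset.abs_sum_le_sum_abs _ _
    _ ≤ (Finset.range ((tauR R R1 ω).toNat)).card • C :=
        Finset.sum_le_card_nsmul _ _ C (fun i _ => hgb _)
    _ = C * ((tauR R R1 ω).toNat : ℝ) := by
        rw [Finset.card_range, nsmul_eq_mul]; ring
  have hIntFull : Integrable
      (fun ω : ℕ → E => ∑ i ∈ Finset.range ((tauR R R1 ω).toNat), g (ω i)) μ := by
    refine ⟨hSm.aestronglyMeasurable, ?_⟩
    have hb : ∀ ω : ℕ → E, (‖∑ i ∈ Finset.range ((tauR R R1 ω).toNat), g (ω i)‖₊ : ℝ≥0∞)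
        ≤ ENNReal.ofReal C * (((tauR R R1 ω).toNat : ℝ≥0∞)) := by
      intro ω
      calc (‖∑ i ∈ Finset.range ((tauR R R1 ω).toNat), g (ω i)‖₊ : ℝ≥0∞)
          = ENNReal.ofReal |∑ i ∈ Finset.range ((tauR R R1 ω).toNat), g (ω i)| := by
            rw [← Real.norm_eq_abs, ofReal_norm]; rfl
      _ ≤ ENNReal.ofReal (C * ((tauR R R1 ω).toNat : ℝ)) :=
          ENNReal.ofReal_le_ofReal (hsumb ω)
      _ = ENNReal.ofReal C * ENNReal.ofReal (((tauR R R1 ω).toNat : ℝ)) :=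
          ENNReal.ofReal_mul hC0
      _ = ENNReal.ofReal C * (((tauR R R1 ω).toNat : ℝ≥0∞)) := by
          rw [ENNReal.ofReal_natCast]
    rw [HasFiniteIntegral]
    calc ∫⁻ ω, (‖∑ i ∈ Finset.range ((tauR R R1 ω).toNat), g (ω i)‖₊ : ℝ≥0∞) ∂μ
        ≤ ∫⁻ ω, ENNReal.ofReal C * (((tauR R R1 ω).toNat : ℝ≥0∞)) ∂μ := lintegral_mono hb
    _ = ENNReal.ofReal C * ∫⁻ ω, (((tauR R R1 ω).toNat : ℝ≥0∞)) ∂μ :=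
        lintegral_const_mul' _ _ ENNReal.ofReal_ne_top
    _ ≤ ENNReal.ofReal C * (C' + 1) := mul_le_mul_right hlin _
    _ < ⊤ := ENNReal.mul_lt_top ENNReal.ofReal_lt_top
        (ENNReal.add_lt_top.2 ⟨lt_top_iff_ne_top.2 hC', ENNReal.one_lt_top⟩)
  have hIntTr : Integrable
      (fun ω : ℕ → E => ∑ i ∈ Finset.range (truncT R R1 N ω), g (ω i)) μ := by
    refine integrable_of_bdd' (M := C * N) hStm.aestronglyMeasurable fun ω => ?_
    calc |∑ i ∈ Finset.range (truncT R R1 N ω), g (ω i)|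
        ≤ ∑ i ∈ Finset.range (truncT R R1 N ω), |g (ω i)| := Finset.abs_sum_le_sum_abs _ _
    _ ≤ (Finset.range (truncT R R1 N ω)).card • C :=
        Finset.sum_le_card_nsmul _ _ C (fun i _ => hgb _)
    _ = ((truncT R R1 N ω : ℝ)) * C := by rw [Finset.card_range, nsmul_eq_mul]
    _ ≤ N * C := by
        have := truncT_le R R1 N ω
        have hcast : ((truncT R R1 N ω : ℝ)) ≤ (N : ℝ) := by exact_mod_cast this
        exact mul_le_mul_of_nonneg_right hcast hC0
    _ = C * N := mul_comm _ _
  rw [← integral_sub hIntFull hIntTr]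
  have habs : |∫ ω, ((∑ i ∈ Finset.range ((tauR R R1 ω).toNat), g (ω i))
      - ∑ i ∈ Finset.range (truncT R R1 N ω), g (ω i)) ∂μ|
      ≤ ∫ ω, |(∑ i ∈ Finset.range ((tauR R R1 ω).toNat), g (ω i))
      - ∑ i ∈ Finset.range (truncT R R1 N ω), g (ω i)| ∂μ := by
    simpa [Real.norm_eq_abs] using norm_integral_le_integral_norm (μ := μ)
      (fun ω : ℕ → E => (∑ i ∈ Finset.range ((tauR R R1 ω).toNat), g (ω i))
        - ∑ i ∈ Finset.range (truncT R R1 N ω), g (ω i))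
  have heq2 : ∫ ω, |(∑ i ∈ Finset.range ((tauR R R1 ω).toNat), g (ω i))
      - ∑ i ∈ Finset.range (truncT R R1 N ω), g (ω i)| ∂μ
      = (∫⁻ ω, ENNReal.ofReal |(∑ i ∈ Finset.range ((tauR R R1 ω).toNat), g (ω i))
      - ∑ i ∈ Finset.range (truncT R R1 N ω), g (ω i)| ∂μ).toReal :=
    integral_eq_lintegral_of_nonneg_ae (ae_of_all _ fun ω => abs_nonneg _)
      ((hSm.sub hStm).abs).aestronglyMeasurable
  have hptw : ∀ ω : ℕ → E, ENNReal.ofReal |(∑ i ∈ Finset.range ((tauR R R1 ω).toNat), g (ω i))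
      - ∑ i ∈ Finset.range (truncT R R1 N ω), g (ω i)|
      ≤ (ENNReal.ofReal C / N) * ((tauR R R1 ω : ℝ≥0∞)) ^ 2 := by
    intro ω
    cases hτ : tauR R R1 ω using ENat.recTopCoe with
    | top =>
      rw [truncT_of_top hτ]
      rcases eq_or_lt_of_le hC0 with hCz | hCz
      · have hg0 : ∀ y, g y = 0 := fun y =>
          abs_eq_zero.mp (le_antisymm (hCz ▸ hgb y) (abs_nonneg _))
        simp [hg0]
      · have hRt : (ENNReal.ofReal C / N) * ((⊤ : ℕ∞) : ℝ≥0∞) ^ 2 = ⊤ := by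
          rw [ENat.toENNReal_top]
          rw [ENNReal.top_pow (by norm_num)]
          refine ENNReal.mul_top ?_
          rw [ne_eq, ENNReal.div_eq_zero_iff]
          push_neg
          exact ⟨by simpa [ENNReal.ofReal_eq_zero] using hCz, hNnt⟩
        rw [hRt]
        exact le_top
    | coe m =>
      have htr : truncT R R1 N ω = min m N := truncT_of_coe hτ N
      have hfull : ((m : ℕ∞)).toNat = m := by simp
      rw [htr, hfull, ENat.toENNReal_coe]
      rcases le_or_gt m N with hmN | hNm
      · rw [min_eq_left hmN, sub_self]
        simp
      · rw [min_eq_right hNm.le]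
        have hsub : Finset.range N ⊆ Finset.range m := Finset.range_subset_range.mpr hNm.le
        have hdval : (∑ i ∈ Finset.range m, g (ω i)) - ∑ i ∈ Finset.range N, g (ω i)
            = ∑ i ∈ Finset.range m \ Finset.range N, g (ω i) :=
          (Finset.sum_sdiff_eq_sub hsub).symm
        have hcard : (Finset.range m \ Finset.range N).card = m - N := by
          rw [Finset.card_sdiff_of_subset hsub, Finset.card_range, Finset.card_range]
        have hd : |(∑ i ∈ Finset.range m, g (ω i)) - ∑ i ∈ Finset.range N, g (ω i)|
            ≤ C * ((m - N : ℕ) : ℝ) := by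
          rw [hdval]
          calc |∑ i ∈ Finset.range m \ Finset.range N, g (ω i)|
              ≤ ∑ i ∈ Finset.range m \ Finset.range N, |g (ω i)| :=
              Finset.abs_sum_le_sum_abs _ _
          _ ≤ (Finset.range m \ Finset.range N).card • C :=
              Finset.sum_le_card_nsmul _ _ C (fun i _ => hgb _)
          _ = C * ((m - N : ℕ) : ℝ) := by rw [hcard, nsmul_eq_mul]; ring
        have hkey : (((m - N : ℕ)) : ℝ≥0∞) ≤ ((m : ℝ≥0∞)) ^ 2 / N := by
          rw [ENNReal.le_div_iff_mul_le (Or.inl hNne) (Or.inl hNnt)]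
          have hnat : (m - N) * N ≤ m ^ 2 := by
            calc (m - N) * N ≤ m * m := Nat.mul_le_mul (Nat.sub_le m N) hNm.le
            _ = m ^ 2 := (sq m).symm
          exact_mod_cast hnat
        calc ENNReal.ofReal |(∑ i ∈ Finset.range m, g (ω i)) - ∑ i ∈ Finset.range N, g (ω i)|
            ≤ ENNReal.ofReal (C * ((m - N : ℕ) : ℝ)) := ENNReal.ofReal_le_ofReal hd
        _ = ENNReal.ofReal C * (((m - N : ℕ)) : ℝ≥0∞) := by
            rw [ENNReal.ofReal_mul hC0, ENNReal.ofReal_natCast]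
        _ ≤ ENNReal.ofReal C * (((m : ℝ≥0∞)) ^ 2 / N) := mul_le_mul_right hkey _
        _ = (ENNReal.ofReal C / N) * ((m : ℝ≥0∞)) ^ 2 := by
            simp only [div_eq_mul_inv]; ring
  have hlint : ∫⁻ ω, ENNReal.ofReal |(∑ i ∈ Finset.range ((tauR R R1 ω).toNat), g (ω i))
      - ∑ i ∈ Finset.range (truncT R R1 N ω), g (ω i)| ∂μ ≤ (ENNReal.ofReal C / N) * C' := by
    calc ∫⁻ ω, ENNReal.ofReal |(∑ i ∈ Finset.range ((tauR R R1 ω).toNat), g (ω i))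
        - ∑ i ∈ Finset.range (truncT R R1 N ω), g (ω i)| ∂μ
        ≤ ∫⁻ ω, (ENNReal.ofReal C / N) * ((tauR R R1 ω : ℝ≥0∞)) ^ 2 ∂μ := lintegral_mono hptw
    _ = (ENNReal.ofReal C / N) * ∫⁻ ω, ((tauR R R1 ω : ℝ≥0∞)) ^ 2 ∂μ :=
        lintegral_const_mul' _ _ (ENNReal.div_lt_top ENNReal.ofReal_ne_top hNne).ne
    _ ≤ (ENNReal.ofReal C / N) * C' := mul_le_mul_right hmom _
  have hne2 : (ENNReal.ofReal C / N) * C' ≠ ⊤ :=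
    ENNReal.mul_ne_top (ENNReal.div_lt_top ENNReal.ofReal_ne_top hNne).ne hC'
  calc |∫ ω, ((∑ i ∈ Finset.range ((tauR R R1 ω).toNat), g (ω i))
      - ∑ i ∈ Finset.range (truncT R R1 N ω), g (ω i)) ∂μ|
      ≤ ∫ ω, |(∑ i ∈ Finset.range ((tauR R R1 ω).toNat), g (ω i))
      - ∑ i ∈ Finset.range (truncT R R1 N ω), g (ω i)| ∂μ := habs
  _ = (∫⁻ ω, ENNReal.ofReal |(∑ i ∈ Finset.range ((tauR R R1 ω).toNat), g (ω i))
      - ∑ i ∈ Finset.range (truncT R R1 N ω), g (ω i)| ∂μ).toReal := heq2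
  _ ≤ ((ENNReal.ofReal C / N) * C').toReal := ENNReal.toReal_mono hne2 hlint
  _ = C * C'.toReal / N := by
      rw [ENNReal.toReal_mul, ENNReal.toReal_div, ENNReal.toReal_ofReal hC0,
        ENNReal.toReal_natCast]
      ring

end Tail

/-- Proposition 5: under (EC) and total variation convergence of the
controlled kernels along `u_n → u`, for uniformly bounded Borel `f_n → f` pointwise,
`E_x^{u_n}[Σ_{i<τ_R} f_n(X_i)] → E_x^{u}[Σ_{i<τ_R} f(X_i)]` for every `x ∈ R`. -/
theorem stmt18 {E U : Type*} [MetricSpace E] [PolishSpace E]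
    [MeasurableSpace E] [BorelSpace E]
    [MetricSpace U] [CompactSpace U] [MeasurableSpace U] [BorelSpace U]
    (P : Kernel (E × U) E) [IsMarkovKernel P]
    -- two concentric closed balls R ⊆ R₁
    (z : E) (r r1 : ℝ) (hr : r ≤ r1)
    (R R1 : Set E) (hR : R = Metric.closedBall z r) (hR1 : R1 = Metric.closedBall z r1)
    (un : ℕ → E → U) (u : E → U)
    (hun : ∀ n, Measurable (un n)) (hu : Measurable u)
    (hconv : ∀ x, Tendsto (fun n => un n x) atTop (nhds (u x)))
    (htv : ∀ x, Tendsto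
      (fun n => tvDist (Qctrl P (un n) (hun n) x) (Qctrl P u hu x)) atTop (nhds 0))
    -- the path laws of the controlled chains
    (Pln : ℕ → E → Measure (ℕ → E)) (Plu : E → Measure (ℕ → E))
    (hPln : ∀ n, IsPathLaw (Qctrl P (un n) (hun n)) (Pln n))
    (hPlu : IsPathLaw (Qctrl P u hu) Plu)
    -- (EC)
    (hEC : ∃ C : ℝ≥0∞, C ≠ ⊤ ∧ ∀ x ∈ R,
      (∀ n, ∫⁻ ω, ((tauR R R1 ω : ℝ≥0∞)) ^ 2 ∂ (Pln n x) ≤ C) ∧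
      ∫⁻ ω, ((tauR R R1 ω : ℝ≥0∞)) ^ 2 ∂ (Plu x) ≤ C)
    -- uniformly bounded Borel functions converging pointwise
    (fn : ℕ → E → ℝ) (f : E → ℝ) (C : ℝ)
    (hfn : ∀ n, Measurable (fn n)) (hf : Measurable f)
    (hbd : ∀ n y, |fn n y| ≤ C)
    (hfconv : ∀ y, Tendsto (fun n => fn n y) atTop (nhds (f y))) :
    ∀ x ∈ R,
      Tendsto (fun n =>
          ∫ ω, (∑ i ∈ Finset.range ((tauR R R1 ω).toNat), fn n (ω i)) ∂ (Pln n x))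
        atTop
        (nhds (∫ ω, (∑ i ∈ Finset.range ((tauR R R1 ω).toNat), f (ω i)) ∂ (Plu x))) := by
  intro x hx
  obtain ⟨C', hC', hEC'⟩ := hEC
  have hPn : ∀ n y, IsProbabilityMeasure (Pln n y) := fun n y => (hPln n).2.1 y
  have hPu : ∀ y, IsProbabilityMeasure (Plu y) := fun y => hPlu.2.1 y
  have hRm : MeasurableSet R := by
    rw [hR]; exact Metric.isClosed_closedBall.measurableSet
  have hR1m : MeasurableSet R1 := by
    rw [hR1]; exact Metric.isClosed_closedBall.measurableSet
  have hfb : ∀ y, |f y| ≤ C := fun y =>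
    le_of_tendsto ((hfconv y).abs) (Filter.Eventually.of_forall fun n => hbd n y)
  have hC0 : 0 ≤ C := (abs_nonneg _).trans (hbd 0 x)
  haveI hMn : ∀ n, IsMarkovKernel (Qctrl P (un n) (hun n)) := fun n =>
    Kernel.IsMarkovKernel.comap P (measurable_id.prodMk (hun n))
  haveI hMu : IsMarkovKernel (Qctrl P u hu) :=
    Kernel.IsMarkovKernel.comap P (measurable_id.prodMk hu)
  -- truncated convergence from the key induction
  have hkey : ∀ N : ℕ, Tendsto
      (fun n => ∫ ω, (∑ i ∈ Finset.range (truncT R R1 N ω), fn n (ω i)) ∂ (Pln n x)) atTop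
      (nhds (∫ ω, (∑ i ∈ Finset.range (truncT R R1 N ω), f (ω i)) ∂ (Plu x))) := by
    intro N
    have hBd : ∀ (g : E → ℝ), (∀ y, |g y| ≤ C) → ∀ ω : ℕ → E,
        |∑ i ∈ Finset.range (truncT R R1 N ω), g (ω i)| ≤ C * N := by
      intro g hgb ω
      calc |∑ i ∈ Finset.range (truncT R R1 N ω), g (ω i)|
          ≤ ∑ i ∈ Finset.range (truncT R R1 N ω), |g (ω i)| := Finset.abs_sum_le_sum_abs _ _
      _ ≤ (Finset.range (truncT R R1 N ω)).card • C :=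
          Finset.sum_le_card_nsmul _ _ C (fun i _ => hgb _)
      _ = ((truncT R R1 N ω : ℝ)) * C := by rw [Finset.card_range, nsmul_eq_mul]
      _ ≤ N * C := by
          have hle := truncT_le R R1 N ω
          have hcast : ((truncT R R1 N ω : ℝ)) ≤ (N : ℝ) := by exact_mod_cast hle
          exact mul_le_mul_of_nonneg_right hcast hC0
      _ = C * N := mul_comm _ _
    exact key_induction (fun n => Qctrl P (un n) (hun n)) (Qctrl P u hu) htv Pln Plu hPln hPlu
      (N + 1) (C * N)
      (fun n ω => ∑ i ∈ Finset.range (truncT R R1 N ω), fn n (ω i))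
      (fun ω => ∑ i ∈ Finset.range (truncT R R1 N ω), f (ω i))
      (fun n => measurable_sumT (measurable_truncT hRm hR1m N) (hfn n))
      (measurable_sumT (measurable_truncT hRm hR1m N) hf)
      (fun n => hBd (fn n) (hbd n)) (hBd f hfb)
      (fun n => depOn_sumTrunc (fn n)) (depOn_sumTrunc f)
      (fun ω => tendsto_finset_sum _ fun i _ => hfconv (ω i)) x
  have htail1 : ∀ N : ℕ, 1 ≤ N → ∀ n,
      |(∫ ω, (∑ i ∈ Finset.range ((tauR R R1 ω).toNat), fn n (ω i)) ∂ (Pln n x))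
        - ∫ ω, (∑ i ∈ Finset.range (truncT R R1 N ω), fn n (ω i)) ∂ (Pln n x)|
      ≤ C * C'.toReal / N := by
    intro N hN n
    haveI := hPn n x
    exact tail_bound hRm hR1m (Pln n x) hC' ((hEC' x hx).1 n) (hfn n) (hbd n) hN
  have htail2 : ∀ N : ℕ, 1 ≤ N →
      |(∫ ω, (∑ i ∈ Finset.range ((tauR R R1 ω).toNat), f (ω i)) ∂ (Plu x))
        - ∫ ω, (∑ i ∈ Finset.range (truncT R R1 N ω), f (ω i)) ∂ (Plu x)|
      ≤ C * C'.toReal / N := by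
    intro N hN
    haveI := hPu x
    exact tail_bound hRm hR1m (Plu x) hC' (hEC' x hx).2 hf hfb hN
  rw [Metric.tendsto_atTop]
  intro ε hε
  have hdiv : Tendsto (fun N : ℕ => C * C'.toReal / N) atTop (nhds 0) :=
    tendsto_const_div_atTop_nhds_zero_nat (C * C'.toReal)
  obtain ⟨N, hN4, hN1⟩ :=
    ((hdiv.eventually (gt_mem_nhds (show (0:ℝ) < ε/4 by linarith))).and
      (eventually_ge_atTop 1)).exists
  obtain ⟨n₀, hn₀⟩ := (Metric.tendsto_atTop.mp (hkey N)) (ε/4) (by linarith)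
  refine ⟨n₀, fun n hn => ?_⟩
  have h2 := hn₀ n hn
  rw [Real.dist_eq] at h2 ⊢
  have h1 := htail1 N hN1 n
  have h3 := htail2 N hN1
  have habs3 : |(∫ ω, (∑ i ∈ Finset.range (truncT R R1 N ω), f (ω i)) ∂ (Plu x))
      - ∫ ω, (∑ i ∈ Finset.range ((tauR R R1 ω).toNat), f (ω i)) ∂ (Plu x)|
      ≤ C * C'.toReal / N := by
    rw [abs_sub_comm]; exact h3
  calc |(∫ ω, (∑ i ∈ Finset.range ((tauR R R1 ω).toNat), fn n (ω i)) ∂ (Pln n x))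
      - ∫ ω, (∑ i ∈ Finset.range ((tauR R R1 ω).toNat), f (ω i)) ∂ (Plu x)|
      ≤ |(∫ ω, (∑ i ∈ Finset.range ((tauR R R1 ω).toNat), fn n (ω i)) ∂ (Pln n x))
        - ∫ ω, (∑ i ∈ Finset.range (truncT R R1 N ω), fn n (ω i)) ∂ (Pln n x)|
        + |(∫ ω, (∑ i ∈ Finset.range (truncT R R1 N ω), fn n (ω i)) ∂ (Pln n x))
        - ∫ ω, (∑ i ∈ Finset.range ((tauR R R1 ω).toNat), f (ω i)) ∂ (Plu x)| :=
      abs_sub_le _ _ _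
  _ ≤ |(∫ ω, (∑ i ∈ Finset.range ((tauR R R1 ω).toNat), fn n (ω i)) ∂ (Pln n x))
        - ∫ ω, (∑ i ∈ Finset.range (truncT R R1 N ω), fn n (ω i)) ∂ (Pln n x)|
        + (|(∫ ω, (∑ i ∈ Finset.range (truncT R R1 N ω), fn n (ω i)) ∂ (Pln n x))
        - ∫ ω, (∑ i ∈ Finset.range (truncT R R1 N ω), f (ω i)) ∂ (Plu x)|
        + |(∫ ω, (∑ i ∈ Finset.range (truncT R R1 N ω), f (ω i)) ∂ (Plu x))
        - ∫ ω, (∑ i ∈ Finset.range ((tauR R R1 ω).toNat), f (ω i)) ∂ (Plu x)|) := by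
      have := abs_sub_le
        (∫ ω, (∑ i ∈ Finset.range (truncT R R1 N ω), fn n (ω i)) ∂ (Pln n x))
        (∫ ω, (∑ i ∈ Finset.range (truncT R R1 N ω), f (ω i)) ∂ (Plu x))
        (∫ ω, (∑ i ∈ Finset.range ((tauR R R1 ω).toNat), f (ω i)) ∂ (Plu x))
      linarith
  _ < ε := by linarith
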